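/- arXiv:2501.13355 — 3 statements merged into one kernel-verified Lean document; each statement's English description precedes it below -/
import Mathlib

section
/- Under the setup where φ̂(x) are independent with mean φ(x) and variance η(x)², and η̂(x)² are unbiased estimators of η(x)² (with η̂(x)² independent across x and independent of φ̂(x') for x' ≠ x), for a group S ⊆ X with M = Σ_{x∈S} p(x) > 0 and group mean φ̂* = (Σ_{x∈S} p(x)φ̂(x))/M, the expectation of the estimated loss Δ̂ = Σ_{x∈S} p(x)[(φ̂* − φ̂(x))² − η̂(x)²] equals Σ_{x∈S} p(x)(φ̄* − φ(x))² − Σ_{x∈S} η(x)² p(x)²/M, where φ̄* = (Σ_{x∈S} p(x)φ(x))/M. -/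
open MeasureTheory Finset

/-- Exact expectation of the variance-corrected within-group squared
prediction error Δ̂: the only residual bias is the degrees-of-freedom term. -/
theorem stmt3 {X Ω : Type*} [Fintype X] [MeasurableSpace Ω]
    (μ : Measure Ω) [IsProbabilityMeasure μ]
    (p φ η : X → ℝ) (φhat etahat2 : X → Ω → ℝ)
    (hp : ∀ x, 0 ≤ p x)
    (hmeasφ : ∀ x, Measurable (φhat x))
    (hmeasη : ∀ x, Measurable (etahat2 x))
    (hind : ProbabilityTheory.iIndepFun
      (m := fun _ : X => (inferInstance : MeasurableSpace (ℝ × ℝ)))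
      (fun x ω => (φhat x ω, etahat2 x ω)) μ)
    (hint2 : ∀ x, Integrable (fun ω => (φhat x ω) ^ 2) μ)
    (hintη : ∀ x, Integrable (etahat2 x) μ)
    (hmean : ∀ x, ∫ ω, φhat x ω ∂μ = φ x)
    (hvar : ∀ x, ∫ ω, (φhat x ω - φ x) ^ 2 ∂μ = (η x) ^ 2)
    (hmeanη : ∀ x, ∫ ω, etahat2 x ω ∂μ = (η x) ^ 2)
    (S : Finset X) (hM : 0 < ∑ x ∈ S, p x) :
    ∫ ω, (∑ x ∈ S, p x *
        (((∑ y ∈ S, p y * φhat y ω) / (∑ y ∈ S, p y) - φhat x ω) ^ 2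
          - etahat2 x ω)) ∂μ
      = (∑ x ∈ S, p x *
          ((∑ y ∈ S, p y * φ y) / (∑ y ∈ S, p y) - φ x) ^ 2)
        - ∑ x ∈ S, η x ^ 2 * p x ^ 2 / (∑ y ∈ S, p y) := by
  classical
  set M : ℝ := ∑ x ∈ S, p x with hMdef
  have hM0 : M ≠ 0 := ne_of_gt hM
  -- integrability of φhat x
  have hint1 : ∀ x, Integrable (φhat x) μ := by
    intro x
    have h2 : MemLp (φhat x) 2 μ :=
      (memLp_two_iff_integrable_sq (hmeasφ x).aestronglyMeasurable).2
        (by simpa [sq] using hint2 x)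
    exact memLp_one_iff_integrable.1 (h2.mono_exponent (by norm_num))
  -- pairwise independence of the φhat's
  have hindφ : ∀ x y, x ≠ y → ProbabilityTheory.IndepFun (φhat x) (φhat y) μ := by
    intro x y hxy
    exact (hind.indepFun hxy).comp measurable_fst measurable_fst
  have hintmul : ∀ x y, Integrable (fun ω => φhat x ω * φhat y ω) μ := by
    intro x y
    by_cases h : x = y
    · subst h; simpa [sq] using hint2 x
    · exact (hindφ x y h).integrable_mul (hint1 x) (hint1 y)
  -- second moments
  have hq : ∀ x y, ∫ ω, φhat x ω * φhat y ω ∂μ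
      = φ x * φ y + (if x = y then η x ^ 2 else 0) := by
    intro x y
    by_cases h : x = y
    · subst h
      have i1 : Integrable (fun ω => φhat x ω * φhat x ω - 2 * φ x * φhat x ω) μ :=
        (hintmul x x).sub ((hint1 x).const_mul _)
      have hv : ∫ ω, ((φhat x ω * φhat x ω - 2 * φ x * φhat x ω) + φ x ^ 2) ∂μ
          = η x ^ 2 := by
        rw [← hvar x]; congr 1; funext ω; ring
      rw [integral_add i1 (integrable_const _),
          integral_sub (hintmul x x) ((hint1 x).const_mul _), integral_const_mul _ _,
          hmean, integral_const] at hv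
      simp only [probReal_univ, measure_univ, ENNReal.toReal_one, smul_eq_mul, one_mul] at hv
      rw [if_pos rfl]
      linarith [hv]
    · rw [if_neg h, add_zero, ← hmean x, ← hmean y]
      exact (hindφ x y h).integral_mul_eq_mul_integral (hint1 x).aestronglyMeasurable (hint1 y).aestronglyMeasurable
  -- pointwise expansion of the integrand
  have key : (fun ω => ∑ x ∈ S, p x *
        (((∑ y ∈ S, p y * φhat y ω) / M - φhat x ω) ^ 2 - etahat2 x ω))
      = fun ω => ∑ x ∈ S,
          ((∑ y ∈ S, ∑ z ∈ S, (p x * p y * p z / M ^ 2) * (φhat y ω * φhat z ω))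
          + (∑ y ∈ S, (-2 * p x * p y / M) * (φhat y ω * φhat x ω))
          + p x * (φhat x ω * φhat x ω)
          + (-p x) * etahat2 x ω) := by
    funext ω
    refine Finset.sum_congr rfl fun x _ => ?_
    have e1 : ∑ y ∈ S, ∑ z ∈ S, (p x * p y * p z / M ^ 2) * (φhat y ω * φhat z ω)
        = p x / M ^ 2 * ((∑ y ∈ S, p y * φhat y ω) * (∑ z ∈ S, p z * φhat z ω)) := by
      rw [Finset.sum_mul_sum, Finset.mul_sum]
      refine Finset.sum_congr rfl fun y _ => ?_
      rw [Finset.mul_sum]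
      exact Finset.sum_congr rfl fun z _ => by ring
    have e2 : ∑ y ∈ S, (-2 * p x * p y / M) * (φhat y ω * φhat x ω)
        = (-2 * p x / M) * ((∑ y ∈ S, p y * φhat y ω) * φhat x ω) := by
      rw [Finset.sum_mul, Finset.mul_sum]
      exact Finset.sum_congr rfl fun y _ => by ring
    rw [e1, e2]
    field_simp
    ring
  rw [key]
  -- integrability pieces
  have iA : ∀ x, Integrable (fun ω =>
      ∑ y ∈ S, ∑ z ∈ S, (p x * p y * p z / M ^ 2) * (φhat y ω * φhat z ω)) μ :=
    fun x => integrable_finset_sum _ fun y _ => integrable_finset_sum _ fun z _ =>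
      (hintmul y z).const_mul _
  have iB : ∀ x, Integrable (fun ω =>
      ∑ y ∈ S, (-2 * p x * p y / M) * (φhat y ω * φhat x ω)) μ :=
    fun x => integrable_finset_sum _ fun y _ => (hintmul y x).const_mul _
  have iC : ∀ x, Integrable (fun ω => p x * (φhat x ω * φhat x ω)) μ :=
    fun x => (hintmul x x).const_mul _
  have iD : ∀ x, Integrable (fun ω => (-p x) * etahat2 x ω) μ :=
    fun x => (hintη x).const_mul _
  have iAB : ∀ x, Integrable (fun ω =>
      (∑ y ∈ S, ∑ z ∈ S, (p x * p y * p z / M ^ 2) * (φhat y ω * φhat z ω))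
      + (∑ y ∈ S, (-2 * p x * p y / M) * (φhat y ω * φhat x ω))) μ :=
    fun x => (iA x).add (iB x)
  have iABC : ∀ x, Integrable (fun ω =>
      (∑ y ∈ S, ∑ z ∈ S, (p x * p y * p z / M ^ 2) * (φhat y ω * φhat z ω))
      + (∑ y ∈ S, (-2 * p x * p y / M) * (φhat y ω * φhat x ω))
      + p x * (φhat x ω * φhat x ω)) μ :=
    fun x => (iAB x).add (iC x)
  have hintsum : ∀ x ∈ S, Integrable (fun ω =>
      (∑ y ∈ S, ∑ z ∈ S, (p x * p y * p z / M ^ 2) * (φhat y ω * φhat z ω))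
      + (∑ y ∈ S, (-2 * p x * p y / M) * (φhat y ω * φhat x ω))
      + p x * (φhat x ω * φhat x ω)
      + (-p x) * etahat2 x ω) μ := fun x _ => (iABC x).add (iD x)
  rw [integral_finset_sum S hintsum]
  -- compute each integral
  have hterm : ∀ x ∈ S, ∫ ω,
      ((∑ y ∈ S, ∑ z ∈ S, (p x * p y * p z / M ^ 2) * (φhat y ω * φhat z ω))
      + (∑ y ∈ S, (-2 * p x * p y / M) * (φhat y ω * φhat x ω))
      + p x * (φhat x ω * φhat x ω)
      + (-p x) * etahat2 x ω) ∂μ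
      = (∑ y ∈ S, ∑ z ∈ S, (p x * p y * p z / M ^ 2)
            * (φ y * φ z + (if y = z then η y ^ 2 else 0)))
      + (∑ y ∈ S, (-2 * p x * p y / M)
            * (φ y * φ x + (if y = x then η y ^ 2 else 0)))
      + p x * (φ x * φ x + η x ^ 2)
      + (-p x) * (η x ^ 2) := by
    intro x _
    have hA : ∫ ω, ∑ y ∈ S, ∑ z ∈ S,
          (p x * p y * p z / M ^ 2) * (φhat y ω * φhat z ω) ∂μ
        = ∑ y ∈ S, ∑ z ∈ S, (p x * p y * p z / M ^ 2)
            * (φ y * φ z + (if y = z then η y ^ 2 else 0)) := by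
      rw [integral_finset_sum _ (fun y _ => integrable_finset_sum _
            fun z _ => (hintmul y z).const_mul _)]
      refine Finset.sum_congr rfl fun y _ => ?_
      rw [integral_finset_sum _ (fun z _ => (hintmul y z).const_mul _)]
      refine Finset.sum_congr rfl fun z _ => ?_
      rw [integral_const_mul, hq]
    have hB : ∫ ω, ∑ y ∈ S, (-2 * p x * p y / M) * (φhat y ω * φhat x ω) ∂μ
        = ∑ y ∈ S, (-2 * p x * p y / M)
            * (φ y * φ x + (if y = x then η y ^ 2 else 0)) := by
      rw [integral_finset_sum _ (fun y _ => (hintmul y x).const_mul _)]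
      refine Finset.sum_congr rfl fun y _ => ?_
      rw [integral_const_mul, hq]
    have hC : ∫ ω, p x * (φhat x ω * φhat x ω) ∂μ
        = p x * (φ x * φ x + η x ^ 2) := by
      rw [integral_const_mul, hq, if_pos rfl]
    have hD' : ∫ ω, (-p x) * etahat2 x ω ∂μ = (-p x) * (η x ^ 2) := by
      rw [integral_const_mul, hmeanη]
    rw [integral_add (iABC x) (iD x), integral_add (iAB x) (iC x),
        integral_add (iA x) (iB x), hA, hB, hC, hD']
  rw [Finset.sum_congr rfl hterm]
  -- now pure algebra
  set Sφ : ℝ := ∑ y ∈ S, p y * φ y with hSφ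
  set D : ℝ := ∑ y ∈ S, η y ^ 2 * p y ^ 2 with hD
  -- collapse the delta sums
  have collapse : ∀ x ∈ S,
      (∑ y ∈ S, ∑ z ∈ S, (p x * p y * p z / M ^ 2)
            * (φ y * φ z + (if y = z then η y ^ 2 else 0)))
      + (∑ y ∈ S, (-2 * p x * p y / M)
            * (φ y * φ x + (if y = x then η y ^ 2 else 0)))
      + p x * (φ x * φ x + η x ^ 2)
      + (-p x) * (η x ^ 2)
      = (p x * (Sφ / M - φ x) ^ 2) + (p x * (D / M ^ 2))
        + (-(2 * (p x ^ 2 * η x ^ 2) / M)) := by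
    intro x hx
    have c1 : ∑ y ∈ S, ∑ z ∈ S, (p x * p y * p z / M ^ 2)
            * (φ y * φ z + (if y = z then η y ^ 2 else 0))
        = p x / M ^ 2 * (Sφ * Sφ) + p x / M ^ 2 * D := by
      have hrow : ∀ y ∈ S, ∑ z ∈ S, (p x * p y * p z / M ^ 2)
            * (φ y * φ z + (if y = z then η y ^ 2 else 0))
          = (p x / M ^ 2) * ((p y * φ y) * Sφ)
            + (p x / M ^ 2) * (η y ^ 2 * p y ^ 2) := by
        intro y hy
        have hsplit : ∑ z ∈ S, (p x * p y * p z / M ^ 2)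
              * (φ y * φ z + (if y = z then η y ^ 2 else 0))
            = (∑ z ∈ S, (p x / M ^ 2) * ((p y * φ y) * (p z * φ z)))
              + ∑ z ∈ S, (if y = z then (p x / M ^ 2) * (η y ^ 2 * p y ^ 2) else 0) := by
          rw [← Finset.sum_add_distrib]
          refine Finset.sum_congr rfl fun z _ => ?_
          by_cases h : y = z
          · subst h; rw [if_pos rfl, if_pos rfl]; ring
          · rw [if_neg h, if_neg h]; ring
        rw [hsplit, Finset.sum_ite_eq S y (fun _ => (p x / M ^ 2) * (η y ^ 2 * p y ^ 2)),
            if_pos hy, ← Finset.mul_sum, ← Finset.mul_sum, ← hSφ]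
      rw [Finset.sum_congr rfl hrow, Finset.sum_add_distrib, ← Finset.mul_sum,
          ← Finset.mul_sum, ← Finset.sum_mul, ← hSφ, ← hD]
    have c2 : ∑ y ∈ S, (-2 * p x * p y / M)
            * (φ y * φ x + (if y = x then η y ^ 2 else 0))
        = (-2 * p x / M) * (Sφ * φ x) + (-2 * p x / M) * (η x ^ 2 * p x) := by
      have hsplit : ∑ y ∈ S, (-2 * p x * p y / M)
            * (φ y * φ x + (if y = x then η y ^ 2 else 0))
          = (∑ y ∈ S, (-2 * p x / M) * ((p y * φ y) * φ x))
            + ∑ y ∈ S, (if y = x then (-2 * p x / M) * (η y ^ 2 * p y) else 0) := by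
        rw [← Finset.sum_add_distrib]
        refine Finset.sum_congr rfl fun y _ => ?_
        by_cases h : y = x
        · subst h; rw [if_pos rfl, if_pos rfl]; ring
        · rw [if_neg h, if_neg h]; ring
      rw [hsplit, Finset.sum_ite_eq' S x (fun y => (-2 * p x / M) * (η y ^ 2 * p y)),
          if_pos hx, ← Finset.mul_sum, ← Finset.sum_mul, ← hSφ]
    rw [c1, c2]
    field_simp
    ring
  rw [Finset.sum_congr rfl collapse, Finset.sum_add_distrib, Finset.sum_add_distrib,
      ← Finset.sum_mul, ← hMdef]
  have hDM : M * (D / M ^ 2) = D / M := by field_simp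
  rw [hDM]
  have h2D : ∑ x ∈ S, -(2 * (p x ^ 2 * η x ^ 2) / M) = -2 * (D / M) := by
    simp only [hD, Finset.sum_div, Finset.mul_sum, neg_mul, ← Finset.sum_neg_distrib]
    exact Finset.sum_congr rfl fun x _ => by ring
  have hRD : ∑ x ∈ S, η x ^ 2 * p x ^ 2 / M = D / M := by
    rw [hD, Finset.sum_div]
  rw [h2D, hRD]
  ring
end

section
/- In the setting of the previous bias computation, if additionally η(x)² ≤ η̄² for all x, p(x) ≤ p̄/|X| for all x, and M = Σ_{x∈S} p(x) ≥ p_min·κ for constants p_min, κ > 0, then |E[Δ̂] − Σ_{x∈S} p(x)(φ̄* − φ(x))²| ≤ η̄² p̄² / (|X| p_min κ). -/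
open MeasureTheory Finset

/-- Weighted sum of squared deviations from the weighted mean. -/
lemma stmt4_aux_wsum {X : Type*} (S : Finset X) (p f : X → ℝ) (hM : (∑ x ∈ S, p x) ≠ 0) :
    ∑ x ∈ S, p x * ((∑ y ∈ S, p y * f y) / (∑ y ∈ S, p y) - f x) ^ 2
      = (∑ x ∈ S, p x * f x ^ 2) - (∑ x ∈ S, p x * f x) ^ 2 / (∑ x ∈ S, p x) := by
  set M := ∑ x ∈ S, p x with hMdef
  set T := ∑ x ∈ S, p x * f x with hT
  have h1 : ∀ x ∈ S, p x * (T / M - f x) ^ 2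
      = (T / M) ^ 2 * p x - (2 * (T / M)) * (p x * f x) + p x * f x ^ 2 := by
    intro x _; ring
  rw [Finset.sum_congr rfl h1, Finset.sum_add_distrib, Finset.sum_sub_distrib,
    ← Finset.mul_sum, ← Finset.mul_sum, ← hMdef, ← hT]
  field_simp
  ring

/-- Bound on the bias of the variance-corrected within-group loss
under overlap conditions. -/
theorem stmt4 {X Ω : Type*} [Fintype X] [Nonempty X] [MeasurableSpace Ω]
    (μ : Measure Ω) [IsProbabilityMeasure μ]
    (p φ η : X → ℝ) (φhat etahat2 : X → Ω → ℝ)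
    (ηbar pbar pmin κ : ℝ)
    (hp : ∀ x, 0 ≤ p x)
    (hmeasφ : ∀ x, Measurable (φhat x))
    (hmeasη : ∀ x, Measurable (etahat2 x))
    (hind : ProbabilityTheory.iIndepFun (β := fun _ : X => ℝ × ℝ)
      (fun x ω => (φhat x ω, etahat2 x ω)) μ)
    (hint2 : ∀ x, Integrable (fun ω => (φhat x ω) ^ 2) μ)
    (hintη : ∀ x, Integrable (etahat2 x) μ)
    (hmean : ∀ x, ∫ ω, φhat x ω ∂μ = φ x)
    (hvar : ∀ x, ∫ ω, (φhat x ω - φ x) ^ 2 ∂μ = (η x) ^ 2)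
    (hmeanη : ∀ x, ∫ ω, etahat2 x ω ∂μ = (η x) ^ 2)
    (hηbar : ∀ x, η x ^ 2 ≤ ηbar ^ 2)
    (hpbar : ∀ x, p x ≤ pbar / (Fintype.card X : ℝ))
    (hpmin : 0 < pmin) (hκ : 0 < κ)
    (S : Finset X) (hMlb : pmin * κ ≤ ∑ x ∈ S, p x) :
    |(∫ ω, (∑ x ∈ S, p x *
        (((∑ y ∈ S, p y * φhat y ω) / (∑ y ∈ S, p y) - φhat x ω) ^ 2
          - etahat2 x ω)) ∂μ)
      - ∑ x ∈ S, p x *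
          ((∑ y ∈ S, p y * φ y) / (∑ y ∈ S, p y) - φ x) ^ 2|
      ≤ ηbar ^ 2 * pbar ^ 2 / ((Fintype.card X : ℝ) * pmin * κ) := by
  classical
  have hMpos : 0 < ∑ x ∈ S, p x := lt_of_lt_of_le (mul_pos hpmin hκ) hMlb
  have hMne : (∑ x ∈ S, p x) ≠ 0 := ne_of_gt hMpos
  -- basic integrability / measurability facts
  have hase : ∀ x, AEStronglyMeasurable (φhat x) μ := fun x => (hmeasφ x).aestronglyMeasurable
  have hmem2 : ∀ x, MemLp (φhat x) 2 μ := fun x =>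
    (memLp_two_iff_integrable_sq (hase x)).mpr (hint2 x)
  have hI1 : ∀ x, Integrable (φhat x) μ := fun x => (hmem2 x).integrable one_le_two
  have hImul : ∀ x y, Integrable (fun ω => φhat x ω * φhat y ω) μ := by
    intro x y
    by_cases h : x = y
    · subst h; simpa [pow_two] using hint2 x
    · have hxy : ProbabilityTheory.IndepFun (φhat x) (φhat y) μ :=
        (hind.indepFun h).comp measurable_fst measurable_fst
      simpa [Pi.mul_def] using hxy.integrable_mul (hI1 x) (hI1 y)
  -- second moment
  have hEsq : ∀ x, ∫ ω, (φhat x ω) ^ 2 ∂μ = φ x ^ 2 + η x ^ 2 := by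
    intro x
    have h1 : (fun ω => (φhat x ω - φ x) ^ 2)
        = fun ω => (φhat x ω) ^ 2 - (2 * φ x * φhat x ω - φ x ^ 2) := by
      funext ω; ring
    have hg : Integrable (fun ω => 2 * φ x * φhat x ω - φ x ^ 2) μ :=
      ((hI1 x).const_mul _).sub (integrable_const _)
    have hg2 : Integrable (fun ω => 2 * φ x * φhat x ω) μ := (hI1 x).const_mul _
    have h2 : ∫ ω, (φhat x ω - φ x) ^ 2 ∂μ
        = ∫ ω, (φhat x ω) ^ 2 ∂μ - ((2 * φ x) * ∫ ω, φhat x ω ∂μ - φ x ^ 2) := by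
      rw [h1, integral_sub (hint2 x) hg, integral_sub hg2 (integrable_const _),
        integral_const_mul, integral_const]
      simp
    rw [hvar x, hmean x] at h2
    linarith
  -- cross moments
  have hcross : ∀ x y, ∫ ω, φhat x ω * φhat y ω ∂μ
      = φ x * φ y + (if x = y then η x ^ 2 else 0) := by
    intro x y
    by_cases h : x = y
    · subst h
      simp only [if_pos rfl]
      rw [show (fun ω => φhat x ω * φhat x ω) = fun ω => (φhat x ω) ^ 2 from
        funext fun ω => by ring]
      rw [hEsq x]; simp [pow_two]
    · have hxy : ProbabilityTheory.IndepFun (φhat x) (φhat y) μ :=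
        (hind.indepFun h).comp measurable_fst measurable_fst
      rw [hxy.integral_fun_mul_eq_mul_integral (hase x) (hase y), hmean x, hmean y, if_neg h, add_zero]
  -- square of the weighted sum, pointwise
  have hsqexp : ∀ ω : Ω, (∑ x ∈ S, p x * φhat x ω) ^ 2
      = ∑ x ∈ S, ∑ y ∈ S, (p x * p y) * (φhat x ω * φhat y ω) := by
    intro ω
    rw [sq, Finset.sum_mul_sum]
    refine Finset.sum_congr rfl fun x _ => Finset.sum_congr rfl fun y _ => by ring
  -- expectation of the squared weighted sum
  have hET2 : ∫ ω, (∑ x ∈ S, p x * φhat x ω) ^ 2 ∂μ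
      = (∑ x ∈ S, p x * φ x) ^ 2 + ∑ x ∈ S, p x ^ 2 * η x ^ 2 := by
    rw [show (fun ω => (∑ x ∈ S, p x * φhat x ω) ^ 2)
        = fun ω => ∑ x ∈ S, ∑ y ∈ S, (p x * p y) * (φhat x ω * φhat y ω) from funext hsqexp]
    rw [integral_finset_sum _ fun x _ => integrable_finset_sum _
      fun y _ => ((hImul x y).const_mul _)]
    have hinner : ∀ x ∈ S, ∫ ω, ∑ y ∈ S, (p x * p y) * (φhat x ω * φhat y ω) ∂μ
        = ∑ y ∈ S, (p x * p y) * (φ x * φ y + if x = y then η x ^ 2 else 0) := by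
      intro x _
      rw [integral_finset_sum _ fun y _ => ((hImul x y).const_mul _)]
      exact Finset.sum_congr rfl fun y _ => by rw [integral_const_mul, hcross x y]
    rw [Finset.sum_congr rfl hinner]
    have expand : ∀ x ∈ S, ∑ y ∈ S, (p x * p y) * (φ x * φ y + if x = y then η x ^ 2 else 0)
        = (∑ y ∈ S, (p x * p y) * (φ x * φ y)) + p x ^ 2 * η x ^ 2 := by
      intro x hx
      rw [show (fun y => (p x * p y) * (φ x * φ y + if x = y then η x ^ 2 else 0))
          = fun y => (p x * p y) * (φ x * φ y)
            + (if x = y then p x ^ 2 * η x ^ 2 else 0) from funext fun y => by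
        by_cases h : x = y
        · subst h; simp; ring
        · simp [h]]
      rw [Finset.sum_add_distrib, Finset.sum_ite_eq S x (fun _ => p x ^ 2 * η x ^ 2), if_pos hx]
    rw [Finset.sum_congr rfl expand, Finset.sum_add_distrib, sq, Finset.sum_mul_sum]
    congr 1
    exact Finset.sum_congr rfl fun x _ => Finset.sum_congr rfl fun y _ => by ring
  -- pointwise rewriting of the integrand
  have hpt : ∀ ω : Ω, ∑ x ∈ S, p x *
        (((∑ y ∈ S, p y * φhat y ω) / (∑ y ∈ S, p y) - φhat x ω) ^ 2 - etahat2 x ω)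
      = ((∑ x ∈ S, p x * (φhat x ω) ^ 2)
          - (∑ x ∈ S, p x * φhat x ω) ^ 2 / (∑ x ∈ S, p x))
        - ∑ x ∈ S, p x * etahat2 x ω := by
    intro ω
    rw [show (fun x => p x *
        (((∑ y ∈ S, p y * φhat y ω) / (∑ y ∈ S, p y) - φhat x ω) ^ 2 - etahat2 x ω))
        = fun x => p x * (((∑ y ∈ S, p y * φhat y ω) / (∑ y ∈ S, p y) - φhat x ω) ^ 2)
          - p x * etahat2 x ω from funext fun x => by ring]
    rw [Finset.sum_sub_distrib, stmt4_aux_wsum S p (fun x => φhat x ω) hMne]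
  -- compute the integral
  have hEint : ∫ ω, (∑ x ∈ S, p x *
        (((∑ y ∈ S, p y * φhat y ω) / (∑ y ∈ S, p y) - φhat x ω) ^ 2 - etahat2 x ω)) ∂μ
      = ((∑ x ∈ S, p x * (φ x ^ 2 + η x ^ 2))
          - ((∑ x ∈ S, p x * φ x) ^ 2 + ∑ x ∈ S, p x ^ 2 * η x ^ 2) / (∑ x ∈ S, p x))
        - ∑ x ∈ S, p x * η x ^ 2 := by
    rw [integral_congr_ae (Filter.Eventually.of_forall hpt)]
    have hIa : Integrable (fun ω => ∑ x ∈ S, p x * (φhat x ω) ^ 2) μ :=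
      integrable_finset_sum _ fun x _ => (hint2 x).const_mul _
    have hIT2 : Integrable (fun ω => (∑ x ∈ S, p x * φhat x ω) ^ 2) μ := by
      rw [show (fun ω => (∑ x ∈ S, p x * φhat x ω) ^ 2)
          = fun ω => ∑ x ∈ S, ∑ y ∈ S, (p x * p y) * (φhat x ω * φhat y ω) from funext hsqexp]
      exact integrable_finset_sum _ fun x _ => integrable_finset_sum _
        fun y _ => ((hImul x y).const_mul _)
    have hIb : Integrable (fun ω => (∑ x ∈ S, p x * φhat x ω) ^ 2 / (∑ x ∈ S, p x)) μ :=
      hIT2.div_const _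
    have hIc : Integrable (fun ω => ∑ x ∈ S, p x * etahat2 x ω) μ :=
      integrable_finset_sum _ fun x _ => (hintη x).const_mul _
    have hIab : Integrable (fun ω => (∑ x ∈ S, p x * (φhat x ω) ^ 2)
        - (∑ x ∈ S, p x * φhat x ω) ^ 2 / (∑ x ∈ S, p x)) μ := hIa.sub hIb
    rw [integral_sub hIab hIc, integral_sub hIa hIb, integral_div, hET2,
      integral_finset_sum _ fun x _ => (hint2 x).const_mul _,
      integral_finset_sum _ fun x _ => (hintη x).const_mul _]
    congr 1
    · congr 1
      exact Finset.sum_congr rfl fun x _ => by rw [integral_const_mul, hEsq x]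
    · exact Finset.sum_congr rfl fun x _ => by rw [integral_const_mul, hmeanη x]
  -- the difference is exactly -(∑ p² η²)/M
  have hdiff : (∫ ω, (∑ x ∈ S, p x *
        (((∑ y ∈ S, p y * φhat y ω) / (∑ y ∈ S, p y) - φhat x ω) ^ 2
          - etahat2 x ω)) ∂μ)
      - ∑ x ∈ S, p x * ((∑ y ∈ S, p y * φ y) / (∑ y ∈ S, p y) - φ x) ^ 2
      = -((∑ x ∈ S, p x ^ 2 * η x ^ 2) / (∑ x ∈ S, p x)) := by
    rw [hEint, stmt4_aux_wsum S p φ hMne]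
    have hsplit : ∑ x ∈ S, p x * (φ x ^ 2 + η x ^ 2)
        = (∑ x ∈ S, p x * φ x ^ 2) + ∑ x ∈ S, p x * η x ^ 2 := by
      rw [← Finset.sum_add_distrib]
      exact Finset.sum_congr rfl fun x _ => by ring
    rw [hsplit]
    field_simp
    ring
  rw [hdiff, abs_neg, abs_div, abs_of_pos hMpos,
    abs_of_nonneg (Finset.sum_nonneg fun x _ => mul_nonneg (sq_nonneg _) (sq_nonneg _))]
  -- now bound (∑ p² η²)/M
  have hNpos : (0 : ℝ) < (Fintype.card X : ℝ) := by exact_mod_cast Fintype.card_pos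
  have hterm : ∀ x ∈ S, p x ^ 2 * η x ^ 2 ≤ (pbar / (Fintype.card X : ℝ)) ^ 2 * ηbar ^ 2 :=
    fun x _ => mul_le_mul (pow_le_pow_left₀ (hp x) (hpbar x) 2) (hηbar x) (sq_nonneg _)
      (sq_nonneg _)
  have hsumle : ∑ x ∈ S, p x ^ 2 * η x ^ 2
      ≤ (Fintype.card X : ℝ) * ((pbar / (Fintype.card X : ℝ)) ^ 2 * ηbar ^ 2) := by
    calc ∑ x ∈ S, p x ^ 2 * η x ^ 2
        ≤ (S.card : ℝ) * ((pbar / (Fintype.card X : ℝ)) ^ 2 * ηbar ^ 2) := by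
          simpa using Finset.sum_le_card_nsmul S _ _ hterm
      _ ≤ (Fintype.card X : ℝ) * ((pbar / (Fintype.card X : ℝ)) ^ 2 * ηbar ^ 2) := by
          apply mul_le_mul_of_nonneg_right
          · exact_mod_cast Finset.card_le_univ S
          · exact mul_nonneg (sq_nonneg _) (sq_nonneg _)
  calc (∑ x ∈ S, p x ^ 2 * η x ^ 2) / (∑ x ∈ S, p x)
      ≤ ((Fintype.card X : ℝ) * ((pbar / (Fintype.card X : ℝ)) ^ 2 * ηbar ^ 2)) / (pmin * κ) :=
        div_le_div₀ (mul_nonneg hNpos.le (mul_nonneg (sq_nonneg _) (sq_nonneg _)))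
          hsumle (mul_pos hpmin hκ) hMlb
    _ = ηbar ^ 2 * pbar ^ 2 / ((Fintype.card X : ℝ) * pmin * κ) := by
        field_simp
end

section
/- Let φ̂ⱼ : X → ℝ and πⱼ : X → {0,1} for j = 1,…,M, and define φ̄(x) = (Σⱼ φ̂ⱼ(x)πⱼ(x))/(Σⱼ πⱼ(x)) (when the denominator is positive) and π̄(x) = (1/M)Σⱼ πⱼ(x). Then for any φ(x) ∈ ℝ and σ² ≥ 0, (1/M)Σⱼ [(φ(x) − φ̂ⱼ(x))² πⱼ(x) + σ²(1 − πⱼ(x))] ≥ (φ(x) − φ̄(x))² π̄(x) + σ²(1 − π̄(x)). -/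
open Finset

/-- Ensemble/generalizability-score inequality: the average loss of the
M sub-models dominates the loss of the aggregate prediction weighted by the
generalizability score (Jensen's inequality). -/
theorem stmt18 (M : ℕ) (hM : 0 < M) (π φhat : Fin M → ℝ)
    (hπ : ∀ j, π j = 0 ∨ π j = 1) (φ σ2 : ℝ) (hσ : 0 ≤ σ2) :
    (φ - (∑ j, φhat j * π j) / (∑ j, π j)) ^ 2 * ((∑ j, π j) / M)
        + σ2 * (1 - (∑ j, π j) / M)
      ≤ (1 / M) * ∑ j, ((φ - φhat j) ^ 2 * π j + σ2 * (1 - π j)) := by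
  have hMpos : (0:ℝ) < M := by exact_mod_cast hM
  set S := ∑ j, π j with hS
  set T := ∑ j, φhat j * π j with hT
  set A := ∑ j, (φ - φhat j) ^ 2 * π j with hA
  have hπ2 : ∀ j, π j ^ 2 = π j := by intro j; rcases hπ j with h | h <;> simp [h]
  have hπnn : ∀ j, 0 ≤ π j := by intro j; rcases hπ j with h | h <;> simp [h]
  have hS0 : 0 ≤ S := Finset.sum_nonneg fun j _ => hπnn j
  have hAnn : 0 ≤ A := Finset.sum_nonneg fun j _ =>
    mul_nonneg (sq_nonneg _) (hπnn j)
  have hsum : ∑ j, ((φ - φhat j) ^ 2 * π j + σ2 * (1 - π j))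
      = A + σ2 * (M - S) := by
    rw [Finset.sum_add_distrib]
    congr 1
    rw [← Finset.mul_sum, Finset.sum_sub_distrib]
    simp [hS]
  rw [hsum]
  rcases eq_or_lt_of_le hS0 with hS0' | hSpos
  · have hzero : ∀ j, π j = 0 := by
      intro j
      have := Finset.sum_eq_zero_iff_of_nonneg (fun j _ => hπnn j) |>.mp hS0'.symm
      exact this j (Finset.mem_univ j)
    have : S = 0 := hS0'.symm
    have hA0 : A = 0 := by simp [hA, hzero]
    rw [this, hA0]
    field_simp
    simp
  · -- Cauchy–Schwarz
    have hD : ∑ j, (φ - φhat j) * π j = φ * S - T := by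
      rw [hS, hT, Finset.mul_sum, ← Finset.sum_sub_distrib]
      congr 1; ext j; ring
    have hCS := Finset.sum_mul_sq_le_sq_mul_sq Finset.univ (fun j => π j)
      (fun j => (φ - φhat j) * π j)
    have h1 : ∑ j, π j * ((φ - φhat j) * π j) = φ * S - T := by
      rw [← hD]; congr 1; ext j
      rcases hπ j with h | h <;> simp [h]
    have h2 : ∑ j, ((φ - φhat j) * π j) ^ 2 = A := by
      rw [hA]; congr 1; ext j
      rcases hπ j with h | h <;> [simp [h]; simp [h, mul_pow]]
    rw [h1] at hCS
    simp only [hπ2] at hCS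
    rw [h2] at hCS
    -- hCS : (φ * S - T) ^ 2 ≤ S * A  (after rewriting ∑ π j ^2 = S)
    have hCS' : (φ * S - T) ^ 2 ≤ S * A := by
      convert hCS using 2
    have heq : φ - T / S = (φ * S - T) / S := by
      field_simp
    rw [heq]
    have key : ((φ * S - T) / S) ^ 2 * (S / M) ≤ A / M := by
      rw [div_pow, div_mul_div_comm, div_le_div_iff₀ (by positivity) hMpos]
      have : (φ * S - T) ^ 2 * S ≤ S * A * S := by nlinarith
      calc (φ * S - T) ^ 2 * S * M ≤ S * A * S * M := by nlinarith
        _ = A * (S ^ 2 * M) := by ring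
    have rest : A / M + σ2 * (1 - S / M) = (1 / M) * (A + σ2 * (M - S)) := by
      field_simp
    linarith [key, rest.le]
end
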